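/- arXiv:2105.14363 — 2 statements merged into one kernel-verified Lean document; each statement's English description precedes it below -/
import Mathlib

section
/- If B and C are d×d real symmetric positive definite matrices with B ⪰ C (i.e., B − C is positive semidefinite), then sup over nonzero x of (xᵀBx)/(xᵀCx) is at most det(B)/det(C). -/
open Matrix

set_option maxHeartbeats 1000000 in
/-- If B ⪰ C ≻ 0 are symmetric matrices, then the Rayleigh quotient
    (xᵀBx)/(xᵀCx) is bounded by det(B)/det(C) for every nonzero x. -/
theorem rayleigh_quotient_le_det_ratio {d : ℕ}
    (B C : Matrix (Fin d) (Fin d) ℝ)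
    (hB : B.IsSymm) (hC : C.PosDef) (hBC : (B - C).PosSemidef) :
    ∀ x : Fin d → ℝ, x ≠ 0 →
      (x ⬝ᵥ B.mulVec x) / (x ⬝ᵥ C.mulVec x) ≤ B.det / C.det := by
  intro x hx
  open scoped MatrixOrder in
  set S := CFC.sqrt C with hSdef
  open scoped MatrixOrder in
  have hS : S.PosSemidef := (CFC.sqrt_nonneg C).posSemidef
  open scoped MatrixOrder in
  have hSS : S * S = C := CFC.sqrt_mul_sqrt_self C hC.posSemidef.nonneg
  have hCdet : C.det ≠ 0 := hC.det_pos.ne'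
  have hSdet : IsUnit S.det := by
    have : S.det * S.det = C.det := by rw [← det_mul, hSS]
    exact isUnit_iff_ne_zero.mpr (fun h => hCdet (by rw [← this, h, zero_mul]))
  have hSinv : S * S⁻¹ = 1 := mul_nonsing_inv S hSdet
  have hSinv' : S⁻¹ * S = 1 := nonsing_inv_mul S hSdet
  have hSH : Sᴴ = S := hS.1
  have hSiH : (S⁻¹)ᴴ = S⁻¹ := by rw [conjTranspose_nonsing_inv, hSH]
  set A := S⁻¹ * B * S⁻¹ with hAdef
  have hBH : Bᴴ = B := by
    rw [conjTranspose_eq_transpose_of_trivial]; exact hB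
  have hA : A.IsHermitian := by
    rw [hAdef]
    rw [IsHermitian, conjTranspose_mul, conjTranspose_mul, hSiH, hBH, mul_assoc]
  have hA1 : (A - 1).PosSemidef := by
    have := hBC.mul_mul_conjTranspose_same S⁻¹
    rw [hSiH] at this
    convert this using 1
    rw [hAdef, Matrix.mul_sub, Matrix.sub_mul]
    congr 1
    rw [← hSS, ← mul_assoc, mul_assoc (S⁻¹ * S), hSinv', hSinv, one_mul]
  set μ := hA.eigenvalues with hmu
  have h1 : ∀ i, 1 ≤ μ i := by
    intro i
    set v : Fin d → ℝ := ⇑(hA.eigenvectorBasis i) with hv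
    have hvne : v ≠ 0 := fun h => hA.eigenvectorBasis.orthonormal.ne_zero i (by ext j; exact congrFun h j)
    have hvv : 0 < v ⬝ᵥ v := by
      have h0 : 0 ≤ v ⬝ᵥ v := Finset.sum_nonneg fun j _ => mul_self_nonneg _
      have hne : v ⬝ᵥ v ≠ 0 := fun h => hvne (dotProduct_self_eq_zero.mp h)
      exact lt_of_le_of_ne h0 (Ne.symm hne)
    have hmul : (A - 1) *ᵥ v = (μ i - 1) • v := by
      rw [Matrix.sub_mulVec, hA.mulVec_eigenvectorBasis, one_mulVec, sub_smul, one_smul]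
    have h0 := hA1.dotProduct_mulVec_nonneg v
    rw [hmul] at h0
    simp only [dotProduct_smul, star_trivial, smul_eq_mul] at h0
    nlinarith
  set q := ∏ i, μ i with hq
  have hq1 : ∀ i, μ i ≤ q := by
    intro i
    have hmp : μ i * ∏ j ∈ Finset.univ.erase i, μ j = q :=
      Finset.mul_prod_erase Finset.univ μ (Finset.mem_univ i)
    have h2 : 1 ≤ ∏ j ∈ Finset.univ.erase i, μ j := by
      have := Finset.prod_le_prod (s := Finset.univ.erase i)
        (f := fun _ => (1:ℝ)) (g := μ) (fun j _ => zero_le_one) (fun j _ => h1 j)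
      simpa using this
    calc μ i ≤ μ i * ∏ j ∈ Finset.univ.erase i, μ j :=
          le_mul_of_one_le_right (zero_le_one.trans (h1 i)) h2
      _ = q := hmp
  have hdetA : A.det = q := by
    have := hA.det_eq_prod_eigenvalues
    simpa using this
  have hqval : q = B.det / C.det := by
    have hdSS : S.det * S.det = C.det := by rw [← det_mul, hSS]
    have : A.det = S.det⁻¹ * B.det * S.det⁻¹ := by
      rw [hAdef, det_mul, det_mul, det_nonsing_inv, Ring.inverse_eq_inv']
    rw [← hdetA, this, ← hdSS]
    have hSd0 : S.det ≠ 0 := fun h => hCdet (by rw [← hdSS, h, zero_mul])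
    field_simp
  -- (q • 1 - A) is PSD
  set U : Matrix (Fin d) (Fin d) ℝ := (hA.eigenvectorUnitary : Matrix (Fin d) (Fin d) ℝ)
    with hUdef
  have hUU : U * Uᴴ = 1 := by
    rw [← star_eq_conjTranspose]
    exact mem_unitaryGroup_iff.mp hA.eigenvectorUnitary.2
  have hPSD1 : (q • (1 : Matrix (Fin d) (Fin d) ℝ) - A).PosSemidef := by
    have hd : ((Matrix.diagonal (fun i => q - μ i)) : Matrix (Fin d) (Fin d) ℝ).PosSemidef :=
      posSemidef_diagonal_iff.mpr fun i => sub_nonneg.mpr (hq1 i)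
    have hconj := hd.mul_mul_conjTranspose_same U
    have heq : U * Matrix.diagonal (fun i => q - μ i) * Uᴴ
        = q • (1 : Matrix (Fin d) (Fin d) ℝ) - A := by
      have hdiag : Matrix.diagonal (fun i => q - μ i)
          = q • (1 : Matrix (Fin d) (Fin d) ℝ) - Matrix.diagonal μ := by
        rw [smul_one_eq_diagonal, ← diagonal_sub]
      rw [hdiag, Matrix.mul_sub, Matrix.sub_mul]
      congr 1
      · rw [Matrix.mul_smul, Matrix.smul_mul, mul_one, hUU]
      · have hof : RCLike.ofReal ∘ hA.eigenvalues = μ := by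
          funext j; simp [hmu]
        have := hA.spectral_theorem
        rw [hof] at this
        rw [← star_eq_conjTranspose, hUdef]
        exact this.symm
    rwa [heq] at hconj
  -- conjugate by S
  have hPSD2 : (q • C - B).PosSemidef := by
    have hconj := hPSD1.mul_mul_conjTranspose_same S
    rw [hSH] at hconj
    have hSAS : S * A * S = B := by
      rw [hAdef]
      simp only [Matrix.mul_assoc]
      rw [hSinv', mul_one, ← Matrix.mul_assoc, hSinv, one_mul]
    have heq : S * (q • (1 : Matrix (Fin d) (Fin d) ℝ) - A) * S = q • C - B := by
      rw [Matrix.mul_sub, Matrix.sub_mul, Matrix.mul_smul, Matrix.smul_mul, mul_one, hSS, hSAS]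
    rwa [heq] at hconj
  have hCx : 0 < x ⬝ᵥ C *ᵥ x := by simpa using hC.dotProduct_mulVec_pos hx
  have hkey : x ⬝ᵥ B *ᵥ x ≤ q * (x ⬝ᵥ C *ᵥ x) := by
    have h0 := hPSD2.dotProduct_mulVec_nonneg x
    simp only [star_trivial, Matrix.sub_mulVec, dotProduct_sub,
      Matrix.smul_mulVec, dotProduct_smul, smul_eq_mul] at h0
    linarith
  rw [div_le_div_iff₀ hCx hC.det_pos]
  have : x ⬝ᵥ B *ᵥ x ≤ (B.det / C.det) * (x ⬝ᵥ C *ᵥ x) := hqval ▸ hkey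
  calc x ⬝ᵥ B *ᵥ x * C.det ≤ ((B.det / C.det) * (x ⬝ᵥ C *ᵥ x)) * C.det := by
        exact mul_le_mul_of_nonneg_right this hC.det_pos.le
    _ = B.det * (x ⬝ᵥ C *ᵥ x) := by field_simp
end

section
/- Let φ₁, ..., φ_H ∈ ℝ^d be pairwise orthogonal vectors, φ = ∑_{h=1}^H φ_h, and Σ a symmetric positive definite d×d matrix. Then ∑_{h=1}^H ‖φ_h‖_{Σ^{-1}} ≤ √(H · λ_max(Σ)/λ_min(Σ)) · ‖φ‖_{Σ^{-1}}, where ‖v‖_M := √(vᵀMv). -/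
open Matrix

section Helpers
variable {n : Type*} [Fintype n] [DecidableEq n]

private lemma dot_self_nonneg' (x : n → ℝ) : 0 ≤ x ⬝ᵥ x :=
  Finset.sum_nonneg fun i _ => mul_self_nonneg _

private lemma symm_dot (A : Matrix n n ℝ) (hA : A.IsHermitian) (a b : n → ℝ) :
    a ⬝ᵥ A *ᵥ b = b ⬝ᵥ A *ᵥ a := by
  have hT : Aᵀ = A := by ext i j; simpa using congrFun (congrFun hA i) j
  rw [dotProduct_mulVec, ← mulVec_transpose, hT, dotProduct_comm]

private lemma cs_psd (A : Matrix n n ℝ) (hA : A.PosSemidef) (u v : n → ℝ) :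
    (u ⬝ᵥ A *ᵥ v) ^ 2 ≤ (u ⬝ᵥ A *ᵥ u) * (v ⬝ᵥ A *ᵥ v) := by
  set a := v ⬝ᵥ A *ᵥ v
  set b := u ⬝ᵥ A *ᵥ v
  set c := u ⬝ᵥ A *ᵥ u
  have key : ∀ t : ℝ, 0 ≤ a * (t * t) + (2 * b) * t + c := by
    intro t
    have h0 := hA.dotProduct_mulVec_nonneg (u + t • v)
    simp only [star_trivial] at h0
    have hexp : (u + t • v) ⬝ᵥ A *ᵥ (u + t • v) = a * (t * t) + (2 * b) * t + c := by
      have hvu : v ⬝ᵥ A *ᵥ u = b := symm_dot A hA.1 v u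
      simp only [mulVec_add, mulVec_smul, dotProduct_add, add_dotProduct,
        dotProduct_smul, smul_dotProduct, smul_eq_mul, a, b, c]
      rw [hvu]; ring
    linarith [hexp ▸ h0]
  have := discrim_le_zero key
  rw [discrim] at this
  nlinarith

private lemma quad_eq_sum (A : Matrix n n ℝ) (hA : A.IsHermitian) (x : n → ℝ) :
    x ⬝ᵥ A *ᵥ x = ∑ i, hA.eigenvalues i * ((star (hA.eigenvectorUnitary : Matrix n n ℝ) *ᵥ x) i)^2 ∧
    x ⬝ᵥ x = ∑ i, ((star (hA.eigenvectorUnitary : Matrix n n ℝ) *ᵥ x) i)^2 := by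
  set U := (hA.eigenvectorUnitary : Matrix n n ℝ)
  set y := star U *ᵥ x with hy
  have hsU : star U = Uᵀ := by ext i j; simp [conjTranspose_apply]
  have hvm : x ᵥ* U = y := by rw [hy, hsU, mulVec_transpose]
  constructor
  · conv_lhs => rw [hA.spectral_theorem]
    rw [Unitary.conjStarAlgAut_apply, ← mulVec_mulVec, ← mulVec_mulVec, Matrix.dotProduct_mulVec, hvm]
    simp only [mulVec_diagonal, dotProduct, Function.comp, RCLike.ofReal_real_eq_id, id_eq]
    exact Finset.sum_congr rfl fun i _ => by ring
  · have hx : x ⬝ᵥ x = y ⬝ᵥ y := by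
      have h1 : y ⬝ᵥ y = (y ᵥ* star U) ⬝ᵥ x := by
        conv_lhs => rw [hy]
        rw [Matrix.dotProduct_mulVec]
      rw [h1, hsU, vecMul_transpose, hy, mulVec_mulVec,
        Unitary.mul_star_self_of_mem hA.eigenvectorUnitary.2, one_mulVec]
    rw [hx, dotProduct]
    exact Finset.sum_congr rfl fun i _ => by ring

private lemma quad_le_sup [Nonempty n] (A : Matrix n n ℝ) (hA : A.IsHermitian) (x : n → ℝ) :
    x ⬝ᵥ A *ᵥ x ≤ (⨆ i, hA.eigenvalues i) * (x ⬝ᵥ x) := by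
  obtain ⟨h1, h2⟩ := quad_eq_sum A hA x
  rw [h1, h2, Finset.mul_sum]
  exact Finset.sum_le_sum fun i _ => mul_le_mul_of_nonneg_right
    (le_ciSup (Set.Finite.bddAbove (Set.finite_range _)) i) (sq_nonneg _)

private lemma inf_le_quad [Nonempty n] (A : Matrix n n ℝ) (hA : A.IsHermitian) (x : n → ℝ) :
    (⨅ i, hA.eigenvalues i) * (x ⬝ᵥ x) ≤ x ⬝ᵥ A *ᵥ x := by
  obtain ⟨h1, h2⟩ := quad_eq_sum A hA x
  rw [h1, h2, Finset.mul_sum]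
  exact Finset.sum_le_sum fun i _ => mul_le_mul_of_nonneg_right
    (ciInf_le (Set.Finite.bddBelow (Set.finite_range _)) i) (sq_nonneg _)

end Helpers

/-- Sandwich upper bound: for pairwise orthogonal φ₁,…,φ_H with φ = ∑ φ_h and Σ
    symmetric positive definite,
    ∑_h ‖φ_h‖_{Σ⁻¹} ≤ √(H · λ_max(Σ)/λ_min(Σ)) · ‖φ‖_{Σ⁻¹}. -/
theorem sum_invnorm_le_sqrt_cond_mul_invnorm {d H : ℕ} (hd : 0 < d)
    (φ : Fin H → (Fin d → ℝ))
    (horth : ∀ h h' : Fin H, h ≠ h' → φ h ⬝ᵥ φ h' = 0)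
    (S : Matrix (Fin d) (Fin d) ℝ) (hS : S.PosDef) :
    haveI : Nonempty (Fin d) := Fin.pos_iff_nonempty.mp hd
    ∑ h, Real.sqrt (φ h ⬝ᵥ S⁻¹.mulVec (φ h)) ≤
      Real.sqrt ((H : ℝ) * ((⨆ i, hS.1.eigenvalues i) / (⨅ i, hS.1.eigenvalues i))) *
        Real.sqrt ((∑ h, φ h) ⬝ᵥ S⁻¹.mulVec (∑ h, φ h)) := by
  haveI : Nonempty (Fin d) := Fin.pos_iff_nonempty.mp hd
  set m := ⨅ i, hS.1.eigenvalues i with hm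
  set M := ⨆ i, hS.1.eigenvalues i with hM
  -- positivity of m, M
  obtain ⟨i0, hi0⟩ := Finite.exists_min hS.1.eigenvalues
  have hm_pos : 0 < m := lt_of_lt_of_le (hS.eigenvalues_pos i0) (le_ciInf hi0)
  have hM_pos : 0 < M := lt_of_lt_of_le (hS.eigenvalues_pos i0)
    (le_ciSup (Set.Finite.bddAbove (Set.finite_range _)) i0)
  have hSS : ∀ x : Fin d → ℝ, S *ᵥ (S⁻¹ *ᵥ x) = x := by
    intro x
    rw [mulVec_mulVec, Matrix.mul_nonsing_inv S (isUnit_iff_ne_zero.mpr hS.det_pos.ne'),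
      one_mulVec]
  have hq_nonneg : ∀ x : Fin d → ℝ, 0 ≤ x ⬝ᵥ S⁻¹ *ᵥ x := by
    intro x
    simpa using hS.inv.posSemidef.dotProduct_mulVec_nonneg x
  have hwq : ∀ x : Fin d → ℝ, (S⁻¹ *ᵥ x) ⬝ᵥ S *ᵥ (S⁻¹ *ᵥ x) = x ⬝ᵥ S⁻¹ *ᵥ x := by
    intro x
    rw [hSS x, dotProduct_comm]
  -- upper bound: q ≤ (x ⬝ᵥ x)/m
  have hupper : ∀ x : Fin d → ℝ, (x ⬝ᵥ S⁻¹ *ᵥ x) * m ≤ x ⬝ᵥ x := by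
    intro x
    set q := x ⬝ᵥ S⁻¹ *ᵥ x with hq
    set w := S⁻¹ *ᵥ x with hw
    have h1 : m * (w ⬝ᵥ w) ≤ q := by
      have := inf_le_quad S hS.1 w
      rw [hwq x] at this
      exact this
    have h3 : q ^ 2 ≤ (x ⬝ᵥ x) * (w ⬝ᵥ w) := by
      have := cs_psd (1 : Matrix (Fin d) (Fin d) ℝ) Matrix.PosSemidef.one x w
      simpa [one_mulVec, hq] using this
    have hq0 : 0 ≤ q := hq_nonneg x
    have hX0 : 0 ≤ x ⬝ᵥ x := dot_self_nonneg' x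
    have hW0 : 0 ≤ w ⬝ᵥ w := dot_self_nonneg' w
    rcases eq_or_lt_of_le hq0 with h | h
    · rw [← h]; simpa using hX0
    · nlinarith [mul_le_mul_of_nonneg_left h3 hm_pos.le]
  -- lower bound: x ⬝ᵥ x ≤ M * q
  have hlower : ∀ x : Fin d → ℝ, x ⬝ᵥ x ≤ M * (x ⬝ᵥ S⁻¹ *ᵥ x) := by
    intro x
    set q := x ⬝ᵥ S⁻¹ *ᵥ x with hq
    set w := S⁻¹ *ᵥ x with hw
    have hcs := cs_psd S hS.posSemidef w x
    have hwx : w ⬝ᵥ S *ᵥ x = x ⬝ᵥ x := by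
      rw [symm_dot S hS.1 w x, hw, hSS x]
    rw [hwx, hwq x] at hcs
    have h2 : x ⬝ᵥ S *ᵥ x ≤ M * (x ⬝ᵥ x) := quad_le_sup S hS.1 x
    have hq0 : 0 ≤ q := hq_nonneg x
    have hX0 : 0 ≤ x ⬝ᵥ x := dot_self_nonneg' x
    rcases eq_or_lt_of_le hX0 with h | h
    · rw [← h]; positivity
    · nlinarith
  -- orthogonality: ‖φ‖² = ∑ ‖φ_h‖²
  have hsumdot : ∀ v : Fin d → ℝ, (∑ h, φ h) ⬝ᵥ v = ∑ h, φ h ⬝ᵥ v := by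
    intro v
    simp only [dotProduct, Finset.sum_apply, Finset.sum_mul]
    exact Finset.sum_comm
  have hdotsum : ∀ v : Fin d → ℝ, v ⬝ᵥ (∑ h, φ h) = ∑ h, v ⬝ᵥ φ h := by
    intro v
    simp only [dotProduct, Finset.sum_apply, Finset.mul_sum]
    exact Finset.sum_comm
  have hN : (∑ h, φ h) ⬝ᵥ (∑ h, φ h) = ∑ h, φ h ⬝ᵥ φ h := by
    rw [hsumdot]
    refine Finset.sum_congr rfl fun h _ => ?_
    rw [hdotsum]
    exact Finset.sum_eq_single h (fun h' _ hne => horth h h' (fun e => hne (e ▸ rfl)))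
      (fun hx => absurd (Finset.mem_univ h) hx)
  set Q := (∑ h, φ h) ⬝ᵥ S⁻¹ *ᵥ (∑ h, φ h) with hQ
  have hQ0 : 0 ≤ Q := hq_nonneg _
  have hsumq : (∑ h, φ h ⬝ᵥ S⁻¹ *ᵥ φ h) * m ≤ M * Q := by
    calc (∑ h, φ h ⬝ᵥ S⁻¹ *ᵥ φ h) * m = ∑ h, (φ h ⬝ᵥ S⁻¹ *ᵥ φ h) * m := by
          rw [Finset.sum_mul]
      _ ≤ ∑ h, φ h ⬝ᵥ φ h := Finset.sum_le_sum fun h _ => hupper (φ h)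
      _ = (∑ h, φ h) ⬝ᵥ (∑ h, φ h) := hN.symm
      _ ≤ M * Q := hlower _
  -- Cauchy-Schwarz on the sum of square roots
  have hcs2 : (∑ h, Real.sqrt (φ h ⬝ᵥ S⁻¹ *ᵥ φ h)) ^ 2 ≤ (H : ℝ) * ∑ h, φ h ⬝ᵥ S⁻¹ *ᵥ φ h := by
    have := sq_sum_le_card_mul_sum_sq (s := (Finset.univ : Finset (Fin H)))
      (f := fun h => Real.sqrt (φ h ⬝ᵥ S⁻¹ *ᵥ φ h))
    simpa [Real.sq_sqrt (hq_nonneg _), Finset.card_univ] using this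
  have hL0 : 0 ≤ ∑ h, Real.sqrt (φ h ⬝ᵥ S⁻¹ *ᵥ φ h) :=
    Finset.sum_nonneg fun h _ => Real.sqrt_nonneg _
  have step1 : ∑ h, Real.sqrt (φ h ⬝ᵥ S⁻¹ *ᵥ φ h) ≤
      Real.sqrt ((H : ℝ) * ∑ h, φ h ⬝ᵥ S⁻¹ *ᵥ φ h) := by
    rw [show (∑ h, Real.sqrt (φ h ⬝ᵥ S⁻¹ *ᵥ φ h)) =
      Real.sqrt ((∑ h, Real.sqrt (φ h ⬝ᵥ S⁻¹ *ᵥ φ h)) ^ 2) from (Real.sqrt_sq hL0).symm]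
    exact Real.sqrt_le_sqrt hcs2
  have step2 : (H : ℝ) * ∑ h, φ h ⬝ᵥ S⁻¹ *ᵥ φ h ≤ (H : ℝ) * (M / m) * Q := by
    have h1 : (∑ h, φ h ⬝ᵥ S⁻¹ *ᵥ φ h) ≤ (M / m) * Q := by
      rw [div_mul_eq_mul_div, le_div_iff₀ hm_pos]
      linarith [hsumq]
    calc (H : ℝ) * ∑ h, φ h ⬝ᵥ S⁻¹ *ᵥ φ h ≤ (H : ℝ) * ((M / m) * Q) :=
          mul_le_mul_of_nonneg_left h1 (Nat.cast_nonneg H)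
      _ = (H : ℝ) * (M / m) * Q := by ring
  calc ∑ h, Real.sqrt (φ h ⬝ᵥ S⁻¹ *ᵥ φ h)
      ≤ Real.sqrt ((H : ℝ) * ∑ h, φ h ⬝ᵥ S⁻¹ *ᵥ φ h) := step1
    _ ≤ Real.sqrt ((H : ℝ) * (M / m) * Q) := Real.sqrt_le_sqrt step2
    _ = Real.sqrt ((H : ℝ) * (M / m)) * Real.sqrt Q := by
        rw [Real.sqrt_mul (by positivity)]
end
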